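/- Let a, b, r ∈ ℂ with a ≠ 0, and let S, E, I, R : ℝ → ℂ be differentiable functions satisfying S'(t) = -r·S(t)·I(t), E'(t) = r·S(t)·I(t) - b·E(t), I'(t) = b·E(t) - a·I(t), R'(t) = a·I(t) for all t ∈ ℝ. Then the functions t ↦ S(t) + E(t) + I(t) + R(t) and t ↦ S(t)·exp(-(r/a)·(S(t) + E(t) + I(t))) are constant on ℝ. -/

import Mathlib

/-- First integrals of the full SEIR model: `S+E+I+R` and
`S·exp(-(r/a)(S+E+I))` are constant along every solution. -/
theorem seir_first_integrals (a b r : ℂ) (ha : a ≠ 0)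
    (S E I R : ℝ → ℂ)
    (hS : ∀ t : ℝ, HasDerivAt S (-r * S t * I t) t)
    (hE : ∀ t : ℝ, HasDerivAt E (r * S t * I t - b * E t) t)
    (hI : ∀ t : ℝ, HasDerivAt I (b * E t - a * I t) t)
    (hR : ∀ t : ℝ, HasDerivAt R (a * I t) t) :
    (∀ t s : ℝ, S t + E t + I t + R t = S s + E s + I s + R s) ∧
    (∀ t s : ℝ,
      S t * Complex.exp (-(r / a) * (S t + E t + I t)) =
      S s * Complex.exp (-(r / a) * (S s + E s + I s))) := by
  constructor
  · intro t s
    have h : ∀ x : ℝ, HasDerivAt (fun x => S x + E x + I x + R x) 0 x := by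
      intro x
      have := (((hS x).add (hE x)).add (hI x)).add (hR x)
      convert this using 1
      · rfl
      · rfl
      ring
    exact is_const_of_deriv_eq_zero (fun x => (h x).differentiableAt)
      (fun x => (h x).deriv) t s
  · intro t s
    have h : ∀ x : ℝ,
        HasDerivAt (fun x => S x * Complex.exp (-(r / a) * (S x + E x + I x))) 0 x := by
      intro x
      have hu : HasDerivAt (fun x => -(r / a) * (S x + E x + I x))
          (-(r / a) * (-a * I x)) x := by
        have := ((hS x).add (hE x)).add (hI x)
        have h2 : HasDerivAt (fun x => S x + E x + I x) (-a * I x) x := by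
          convert this using 1
          · rfl
          · rfl
          ring
        exact h2.const_mul _
      have he := hu.cexp
      have := (hS x).mul he
      convert this using 1
      · rfl
      · rfl
      field_simp
      ring
    exact is_const_of_deriv_eq_zero (fun x => (h x).differentiableAt)
      (fun x => (h x).deriv) t s
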